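/- Let ε > 0 and suppose all event times T_i take values in [0, Tmax). Write x_i = (Z_i, T_i, D_i) and, for g ∈ 𝒢_ε, define the kernel ψ^g(x_i, x_j) = 1{T_i < D_i}·1{T_i < X_j}·g(T_i)^{-2} and its symmetrisation ψ̄^g(x_i, x_j) = (ψ^g(x_i, x_j) + ψ^g(x_j, x_i))/2. Then sup_{g ∈ 𝒢_ε} | (2/(n(n−1))) Σ_{1≤i<j≤n} ψ̄^g(x_i, x_j) − E[ψ̄^g(x_1, x_2)] | converges to 0 almost surely as n → ∞. -/

import Mathlib

open MeasureTheory ProbabilityTheory Filter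
open scoped Classical

/-- `memG ε Tmax g` : the function `g` belongs to the class `𝒢_ε` of non-increasing,
right-continuous functions `[0, Tmax) → [ε, 1]` with `g(0) = 1`. -/
def memG (ε Tmax : ℝ) (g : ℝ → ℝ) : Prop :=
  g 0 = 1 ∧ (∀ t ∈ Set.Ico (0 : ℝ) Tmax, g t ∈ Set.Icc ε 1) ∧
    (∀ s ∈ Set.Ico (0 : ℝ) Tmax, ∀ t ∈ Set.Ico (0 : ℝ) Tmax, s ≤ t → g t ≤ g s) ∧
    (∀ t ∈ Set.Ico (0 : ℝ) Tmax, ContinuousWithinAt g (Set.Ici t) t)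

/-- The kernel `ψ^g(x, y) = 1{T_x < D_x}·1{T_x < X_y}·g(T_x)⁻²` of the denominator of
time-dependent Uno's C-index, where `x = (Z_x, T_x, D_x)` and `X_y = min(T_y, D_y)`. -/
noncomputable def psiker {E : Type*} (g : ℝ → ℝ) (x y : E × ℝ × ℝ) : ℝ :=
  (if x.2.1 < x.2.2 ∧ x.2.1 < min y.2.1 y.2.2 then (1 : ℝ) else 0) * ((g x.2.1) ^ 2)⁻¹

/-- The symmetrisation `ψ̄^g(x, y) = (ψ^g(x, y) + ψ^g(y, x))/2`. -/
noncomputable def psibar {E : Type*} (g : ℝ → ℝ) (x y : E × ℝ × ℝ) : ℝ :=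
  (psiker g x y + psiker g y x) / 2

lemma slln_pt {Ω : Type*} [MeasurableSpace Ω] (P : Measure Ω) [IsProbabilityMeasure P]
    (ξ : ℕ → Ω → ℝ × ℝ) (hmeas : ∀ i, Measurable (ξ i))
    (hident : ∀ i, P.map (ξ i) = P.map (ξ 0))
    (hindep : Pairwise fun i j => IndepFun (ξ i) (ξ j) P)
    (f : ℝ × ℝ → ℝ) (hf : Measurable f) (C : ℝ) (hbd : ∀ i ω, |f (ξ i ω)| ≤ C) :
    ∀ᵐ ω ∂P, Tendsto (fun n : ℕ => (∑ i ∈ Finset.range n, f (ξ i ω)) / n) atTop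
      (nhds (∫ ω', f (ξ 0 ω') ∂P)) := by
  have hX : ∀ i, Measurable fun ω => f (ξ i ω) := fun i => hf.comp (hmeas i)
  have hint : Integrable (fun ω => f (ξ 0 ω)) P :=
    ⟨(hX 0).aestronglyMeasurable,
      HasFiniteIntegral.of_bounded (C := C) (ae_of_all _ fun ω => by
        simpa [Real.norm_eq_abs] using hbd 0 ω)⟩
  have hid : ∀ i, IdentDistrib (fun ω => f (ξ i ω)) (fun ω => f (ξ 0 ω)) P P := by
    intro i
    refine ⟨(hX i).aemeasurable, (hX 0).aemeasurable, ?_⟩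
    have h1 : P.map (fun ω => f (ξ i ω)) = (P.map (ξ i)).map f := by
      rw [Measure.map_map hf (hmeas i)]; rfl
    have h2 : P.map (fun ω => f (ξ 0 ω)) = (P.map (ξ 0)).map f := by
      rw [Measure.map_map hf (hmeas 0)]; rfl
    rw [h1, h2, hident i]
  have hind : Pairwise (Function.onFun (fun x1 x2 => IndepFun x1 x2 P) (fun i ω => f (ξ i ω))) := by
    intro i j hij
    exact (hindep hij).comp hf hf
  have := ProbabilityTheory.strong_law_ae (μ := P) (fun i ω => f (ξ i ω)) hint hind hid
  filter_upwards [this] with ω hω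
  simpa [div_eq_inv_mul] using hω

lemma coverAux (F G : ℝ → ℝ) (hFanti : Antitone F)
    (hrc : ∀ t : ℝ, Tendsto (fun k : ℕ => F (t + 1/(k+1))) atTop (nhds (F t)))
    (hleft : ∀ t : ℝ, Tendsto (fun k : ℕ => F (t - 1/(k+1))) atTop (nhds (G t)))
    (htail : Tendsto (fun k : ℕ => F k) atTop (nhds 0))
    {δ : ℝ} (hδ : 0 < δ) :
    ∀ (n : ℕ) (x : ℝ), F x ≤ n * δ →
      ∃ (k : ℕ) (t : ℕ → ℝ), t 0 = x ∧ (∀ j < k, t j ≤ t (j+1)) ∧ F (t k) ≤ δ ∧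
        ∀ j < k, ∀ s, t j ≤ s → s < t (j+1) → F (t j) - δ ≤ F s ∧ F s ≤ G (t (j+1)) + δ := by
  intro n
  induction n with
  | zero =>
      intro x hx
      exact ⟨0, fun _ => x, rfl, by omega, le_trans (by simpa using hx) hδ.le,
        fun j hj => by omega⟩
  | succ n ih =>
      intro x hx
      by_cases hxδ : F x ≤ δ
      · exact ⟨0, fun _ => x, rfl, by omega, hxδ, fun j hj => by omega⟩
      push_neg at hxδ
      set p : ℝ := F x - δ with hp_def
      have hp : 0 < p := by simp [hp_def]; linarith
      set S : Set ℝ := {s | F s ≤ p} with hS_def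
      have hSne : S.Nonempty := by
        obtain ⟨k, hk⟩ := (htail.eventually_lt_const hp).exists
        exact ⟨(k : ℝ), hk.le⟩
      have hSbdd : BddBelow S := by
        refine ⟨x, fun s hs => ?_⟩
        by_contra hcon
        push_neg at hcon
        have : F x ≤ F s := hFanti hcon.le
        have : F x ≤ p := le_trans this hs
        simp [hp_def] at this; linarith
      set y : ℝ := sInf S with hy_def
      have hxy : x ≤ y := le_csInf hSne (fun s hs => by
        by_contra hcon
        push_neg at hcon
        have : F x ≤ p := le_trans (hFanti hcon.le) hs
        simp [hp_def] at this; linarith)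
      have hnotS : ∀ s, s < y → p < F s := by
        intro s hs
        by_contra hcon
        push_neg at hcon
        exact absurd (csInf_le hSbdd hcon) (not_le.2 hs)
      have hFy : F y ≤ p := by
        refine le_of_tendsto (hrc y) (Eventually.of_forall fun k => ?_)
        have h1 : y < y + 1/(k+1) := lt_add_of_pos_right y (by positivity)
        obtain ⟨a, haS, ha⟩ := exists_lt_of_csInf_lt hSne h1
        exact le_trans (hFanti ha.le) haS
      have hGy : p ≤ G y := by
        refine ge_of_tendsto (hleft y) (Eventually.of_forall fun k => ?_)
        have h1 : y - 1/(k+1) < y := by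
          have : (0:ℝ) < 1/(k+1) := by positivity
          linarith
        exact (hnotS _ h1).le
      have hFy' : F y ≤ n * δ := by
        have : F x ≤ (n+1) * δ := by push_cast at hx ⊢; linarith
        simp [hp_def] at hFy; push_cast; linarith
      obtain ⟨k', t', ht0, htmono, htlast, htint⟩ := ih y hFy'
      refine ⟨k' + 1, fun j => if j = 0 then x else t' (j - 1), by simp, ?_, ?_, ?_⟩
      · intro j hj
        rcases Nat.eq_zero_or_pos j with rfl | hjpos
        · simpa [ht0] using hxy
        · have h1 : j ≠ 0 := hjpos.ne'
          have h2 : j + 1 ≠ 0 := by omega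
          simp only [h1, h2, if_neg, ite_false]
          have : j - 1 < k' := by omega
          have := htmono _ this
          simpa [Nat.sub_add_cancel hjpos] using this
      · simp [Nat.succ_ne_zero]
        exact htlast
      · intro j hj s hs1 hs2
        rcases Nat.eq_zero_or_pos j with rfl | hjpos
        · simp only [ite_true] at hs1
          simp only [Nat.one_ne_zero, ite_false] at hs2
          simp only [ite_true, Nat.one_ne_zero, ite_false]
          have hsy : s < y := by simpa [ht0] using hs2
          constructor
          · exact (by simpa [hp_def] using (hnotS s hsy).le : F x - δ ≤ F s)
          · have h1 : F s ≤ F x := hFanti hs1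
            have h2 : (if 0 + 1 = 0 then x else t' (0 + 1 - 1)) = y := by
              simp [ht0]
            rw [h2]
            simp [hp_def] at hGy
            linarith
        · have h1 : j ≠ 0 := hjpos.ne'
          have h2 : j + 1 ≠ 0 := by omega
          simp only [h1, h2, ite_false] at hs1 hs2 ⊢
          have h3 : j - 1 < k' := by omega
          have h4 : j - 1 + 1 = j := by omega
          have := htint (j-1) h3 s (by simpa using hs1) (by rw [h4]; simpa using hs2)
          rw [h4] at this
          exact this

lemma cover (F G : ℝ → ℝ) (hFanti : Antitone F)
    (hrc : ∀ t : ℝ, Tendsto (fun k : ℕ => F (t + 1/(k+1))) atTop (nhds (F t)))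
    (hleft : ∀ t : ℝ, Tendsto (fun k : ℕ => F (t - 1/(k+1))) atTop (nhds (G t)))
    (htail : Tendsto (fun k : ℕ => F k) atTop (nhds 0))
    {δ : ℝ} (hδ : 0 < δ) :
    ∃ (k : ℕ) (t : ℕ → ℝ), t 0 = -1 ∧ (∀ j < k, t j ≤ t (j+1)) ∧ F (t k) ≤ δ ∧
      ∀ j < k, ∀ s, t j ≤ s → s < t (j+1) → F (t j) - δ ≤ F s ∧ F s ≤ G (t (j+1)) + δ := by
  obtain ⟨n, hn⟩ := exists_nat_ge (F (-1) / δ)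
  have : F (-1) ≤ n * δ := by
    have := (div_le_iff₀ hδ).mp hn
    linarith
  exact coverAux F G hFanti hrc hleft htail hδ n (-1) this


lemma ind_nonneg (c : Prop) [Decidable c] : (0:ℝ) ≤ if c then 1 else 0 := by
  split <;> norm_num

lemma ind_le_one (c : Prop) [Decidable c] : (if c then (1:ℝ) else 0) ≤ 1 := by
  split <;> norm_num

lemma ind_mono {c d : Prop} [Decidable c] [Decidable d] (h : c → d) :
    (if c then (1:ℝ) else 0) ≤ if d then 1 else 0 := by
  by_cases hc : c
  · simp [hc, h hc]
  · simpa [hc] using ind_nonneg d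

lemma mulind_bound {φ C : ℝ} (h : φ ∈ Set.Icc 0 C) (c : Prop) [Decidable c] :
    ‖φ * (if c then (1:ℝ) else 0)‖ ≤ C := by
  rw [Real.norm_eq_abs, abs_mul, abs_of_nonneg h.1]
  calc φ * |if c then (1:ℝ) else 0| ≤ C * 1 := by
        apply mul_le_mul h.2 _ (abs_nonneg _) (le_trans h.1 h.2)
        rw [abs_of_nonneg (ind_nonneg c)]; exact ind_le_one c
    _ = C := mul_one C

lemma tendsto_ind_GT (t τ : ℝ) :
    Tendsto (fun k : ℕ => (if t + 1/(k+1) < τ then (1:ℝ) else 0)) atTop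
      (nhds (if t < τ then 1 else 0)) := by
  by_cases h : t < τ
  · rw [if_pos h]
    have h0 : Tendsto (fun k : ℕ => 1/((k:ℝ)+1)) atTop (nhds 0) :=
      tendsto_one_div_add_atTop_nhds_zero_nat
    have hev : ∀ᶠ k : ℕ in atTop, (if t + 1/((k:ℝ)+1) < τ then (1:ℝ) else 0) = 1 := by
      filter_upwards [h0.eventually_lt_const (show (0:ℝ) < τ - t by linarith)] with k hk
      rw [if_pos (by linarith)]
    exact Tendsto.congr' (hev.mono fun k hk => hk.symm) tendsto_const_nhds
  · rw [if_neg h]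
    push_neg at h
    have hev : ∀ k : ℕ, (if t + 1/((k:ℝ)+1) < τ then (1:ℝ) else 0) = 0 := fun k => by
      rw [if_neg]
      push_neg
      have : (0:ℝ) < 1/((k:ℝ)+1) := by positivity
      linarith
    simp only [hev]
    exact tendsto_const_nhds

lemma tendsto_ind_left (t τ : ℝ) :
    Tendsto (fun k : ℕ => (if t - 1/(k+1) < τ then (1:ℝ) else 0)) atTop
      (nhds (if t ≤ τ then 1 else 0)) := by
  by_cases h : t ≤ τ
  · rw [if_pos h]
    have hev : ∀ k : ℕ, (if t - 1/((k:ℝ)+1) < τ then (1:ℝ) else 0) = 1 := fun k => by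
      rw [if_pos]
      have : (0:ℝ) < 1/((k:ℝ)+1) := by positivity
      linarith
    simp only [hev]
    exact tendsto_const_nhds
  · rw [if_neg h]
    push_neg at h
    have h0 : Tendsto (fun k : ℕ => 1/((k:ℝ)+1)) atTop (nhds 0) :=
      tendsto_one_div_add_atTop_nhds_zero_nat
    have hev : ∀ᶠ k : ℕ in atTop, (if t - 1/((k:ℝ)+1) < τ then (1:ℝ) else 0) = 0 := by
      filter_upwards [h0.eventually_lt_const (show (0:ℝ) < t - τ by linarith)] with k hk
      rw [if_neg]
      push_neg
      linarith
    exact Tendsto.congr' (hev.mono fun k hk => hk.symm) tendsto_const_nhds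

lemma tendsto_ind_tail (τ : ℝ) :
    Tendsto (fun k : ℕ => (if (k:ℝ) < τ then (1:ℝ) else 0)) atTop (nhds 0) := by
  have hev : ∀ᶠ k : ℕ in atTop, (if (k:ℝ) < τ then (1:ℝ) else 0) = 0 := by
    filter_upwards [tendsto_natCast_atTop_atTop.eventually_ge_atTop τ] with k hk
    rw [if_neg (not_lt.mpr hk)]
  exact Tendsto.congr' (hev.mono fun k hk => hk.symm) tendsto_const_nhds

lemma find_interval (t : ℕ → ℝ) (k : ℕ) (hmono : ∀ j < k, t j ≤ t (j+1)) (s : ℝ)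
    (h0 : t 0 ≤ s) (hk : s < t k) : ∃ j < k, t j ≤ s ∧ s < t (j+1) := by
  induction k with
  | zero => exact absurd (lt_of_le_of_lt h0 hk) (lt_irrefl _)
  | succ k ih =>
      by_cases h : s < t k
      · obtain ⟨j, hj, h1, h2⟩ := ih (fun j hj => hmono j (by omega)) h
        exact ⟨j, by omega, h1, h2⟩
      · exact ⟨k, by omega, not_lt.mp h, hk⟩

section GC

variable {Ω : Type*} [MeasurableSpace Ω]

/-- empirical mean of `φᵢ · 1{τᵢ > s}` -/
noncomputable def gcFn (ξ : ℕ → Ω → ℝ × ℝ) (ω : Ω) (n : ℕ) (s : ℝ) : ℝ :=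
  (∑ i ∈ Finset.range n, (ξ i ω).2 * (if s < (ξ i ω).1 then 1 else 0)) / n

noncomputable def gcGn (ξ : ℕ → Ω → ℝ × ℝ) (ω : Ω) (n : ℕ) (s : ℝ) : ℝ :=
  (∑ i ∈ Finset.range n, (ξ i ω).2 * (if s ≤ (ξ i ω).1 then 1 else 0)) / n

noncomputable def gcF (P : Measure Ω) (ξ0 : Ω → ℝ × ℝ) (s : ℝ) : ℝ :=
  ∫ ω', (ξ0 ω').2 * (if s < (ξ0 ω').1 then 1 else 0) ∂P

noncomputable def gcG (P : Measure Ω) (ξ0 : Ω → ℝ × ℝ) (s : ℝ) : ℝ :=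
  ∫ ω', (ξ0 ω').2 * (if s ≤ (ξ0 ω').1 then 1 else 0) ∂P

end GC

theorem unif_gc {Ω : Type*} [MeasurableSpace Ω] (P : Measure Ω) [IsProbabilityMeasure P]
    (ξ : ℕ → Ω → ℝ × ℝ) (hmeas : ∀ i, Measurable (ξ i))
    (hident : ∀ i, P.map (ξ i) = P.map (ξ 0))
    (hindep : Pairwise fun i j => IndepFun (ξ i) (ξ j) P)
    (C : ℝ)
    (hτ : ∀ i ω, 0 ≤ (ξ i ω).1) (hφ : ∀ i ω, (ξ i ω).2 ∈ Set.Icc 0 C) :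
    ∀ᵐ ω ∂P, ∀ δ : ℝ, 0 < δ → ∃ N : ℕ, ∀ n ≥ N, ∀ s : ℝ,
      |gcFn ξ ω n s - gcF P (ξ 0) s| ≤ δ ∧ |gcGn ξ ω n s - gcG P (ξ 0) s| ≤ δ := by
  classical
  have hm1 : ∀ s : ℝ, Measurable (fun p : ℝ × ℝ => p.2 * (if s < p.1 then (1:ℝ) else 0)) :=
    fun s => measurable_snd.mul
      (Measurable.ite (measurableSet_lt measurable_const measurable_fst)
        measurable_const measurable_const)
  have hm2 : ∀ s : ℝ, Measurable (fun p : ℝ × ℝ => p.2 * (if s ≤ p.1 then (1:ℝ) else 0)) :=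
    fun s => measurable_snd.mul
      (Measurable.ite (measurableSet_le measurable_const measurable_fst)
        measurable_const measurable_const)
  have hbd1 : ∀ (s : ℝ) (i : ℕ) (ω : Ω),
      ‖(ξ i ω).2 * (if s < (ξ i ω).1 then (1:ℝ) else 0)‖ ≤ C :=
    fun s i ω => mulind_bound (hφ i ω) _
  have hbd2 : ∀ (s : ℝ) (i : ℕ) (ω : Ω),
      ‖(ξ i ω).2 * (if s ≤ (ξ i ω).1 then (1:ℝ) else 0)‖ ≤ C :=
    fun s i ω => mulind_bound (hφ i ω) _
  have hint1 : ∀ s : ℝ, Integrable (fun ω' => (ξ 0 ω').2 * (if s < (ξ 0 ω').1 then (1:ℝ) else 0)) P :=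
    fun s => ⟨((hm1 s).comp (hmeas 0)).aestronglyMeasurable,
      HasFiniteIntegral.of_bounded (C := C) (ae_of_all _ fun ω => hbd1 s 0 ω)⟩
  have hint2 : ∀ s : ℝ, Integrable (fun ω' => (ξ 0 ω').2 * (if s ≤ (ξ 0 ω').1 then (1:ℝ) else 0)) P :=
    fun s => ⟨((hm2 s).comp (hmeas 0)).aestronglyMeasurable,
      HasFiniteIntegral.of_bounded (C := C) (ae_of_all _ fun ω => hbd2 s 0 ω)⟩
  have hFanti : ∀ s t : ℝ, s ≤ t → gcF P (ξ 0) t ≤ gcF P (ξ 0) s := fun s t hst =>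
    integral_mono (hint1 t) (hint1 s) (fun ω' =>
      mul_le_mul_of_nonneg_left (ind_mono fun h => lt_of_le_of_lt hst h) (hφ 0 ω').1)
  have hGF : ∀ s t : ℝ, s < t → gcG P (ξ 0) t ≤ gcF P (ξ 0) s := fun s t hst =>
    integral_mono (hint2 t) (hint1 s) (fun ω' =>
      mul_le_mul_of_nonneg_left (ind_mono fun h => lt_of_lt_of_le hst h) (hφ 0 ω').1)
  have hF0 : ∀ s : ℝ, 0 ≤ gcF P (ξ 0) s := fun s =>
    integral_nonneg (fun ω' => mul_nonneg (hφ 0 ω').1 (ind_nonneg _))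
  have hrc : ∀ t : ℝ, Tendsto (fun k : ℕ => gcF P (ξ 0) (t + 1/(k+1))) atTop
      (nhds (gcF P (ξ 0) t)) := by
    intro t
    exact tendsto_integral_of_dominated_convergence (fun _ => C)
      (fun k => (hint1 (t + 1/(k+1))).1) (integrable_const C)
      (fun k => ae_of_all _ fun ω' => hbd1 _ 0 ω')
      (ae_of_all _ fun ω' => ((tendsto_ind_GT t ((ξ 0 ω').1)).const_mul ((ξ 0 ω').2)))
  have hleft : ∀ t : ℝ, Tendsto (fun k : ℕ => gcF P (ξ 0) (t - 1/(k+1))) atTop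
      (nhds (gcG P (ξ 0) t)) := by
    intro t
    exact tendsto_integral_of_dominated_convergence (fun _ => C)
      (fun k => (hint1 (t - 1/(k+1))).1) (integrable_const C)
      (fun k => ae_of_all _ fun ω' => hbd1 _ 0 ω')
      (ae_of_all _ fun ω' => ((tendsto_ind_left t ((ξ 0 ω').1)).const_mul ((ξ 0 ω').2)))
  have htail : Tendsto (fun k : ℕ => gcF P (ξ 0) k) atTop (nhds 0) := by
    have h := tendsto_integral_of_dominated_convergence (μ := P)
      (F := fun (k : ℕ) ω' => (ξ 0 ω').2 * (if (k:ℝ) < (ξ 0 ω').1 then (1:ℝ) else 0))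
      (f := fun _ => (0:ℝ)) (fun _ => C)
      (fun k => (hint1 k).1) (integrable_const C)
      (fun k => ae_of_all _ fun ω' => hbd1 _ 0 ω')
      (ae_of_all _ fun ω' => by
        simpa using ((tendsto_ind_tail ((ξ 0 ω').1)).const_mul ((ξ 0 ω').2)))
    rw [show nhds (0:ℝ) = nhds (∫ (_ : Ω), (0:ℝ) ∂P) by rw [integral_zero]]
    exact h
  -- SLLN at a point
  have hslnGT : ∀ t : ℝ, ∀ᵐ ω ∂P, Tendsto (fun n => gcFn ξ ω n t) atTop
      (nhds (gcF P (ξ 0) t)) := by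
    intro t
    have := slln_pt P ξ hmeas hident hindep
      (fun p => p.2 * (if t < p.1 then (1:ℝ) else 0)) (hm1 t) C
      (fun i ω => by simpa [Real.norm_eq_abs] using hbd1 t i ω)
    exact this
  have hslnGE : ∀ t : ℝ, ∀ᵐ ω ∂P, Tendsto (fun n => gcGn ξ ω n t) atTop
      (nhds (gcG P (ξ 0) t)) := by
    intro t
    have := slln_pt P ξ hmeas hident hindep
      (fun p => p.2 * (if t ≤ p.1 then (1:ℝ) else 0)) (hm2 t) C
      (fun i ω => by simpa [Real.norm_eq_abs] using hbd2 t i ω)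
    exact this
  -- grids for each m
  have hcov : ∀ m : ℕ, ∃ (k : ℕ) (t : ℕ → ℝ), t 0 = -1 ∧ (∀ j < k, t j ≤ t (j+1)) ∧
      gcF P (ξ 0) (t k) ≤ 1/(m+1) ∧
      ∀ j < k, ∀ s, t j ≤ s → s < t (j+1) →
        gcF P (ξ 0) (t j) - 1/(m+1) ≤ gcF P (ξ 0) s ∧
        gcF P (ξ 0) s ≤ gcG P (ξ 0) (t (j+1)) + 1/(m+1) := fun m =>
    cover (gcF P (ξ 0)) (gcG P (ξ 0)) (fun s t hst => hFanti s t hst) hrc hleft htail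
      (by positivity)
  choose k t ht0 htmono htlast htint using hcov
  have hAS : ∀ᵐ ω ∂P, ∀ m j : ℕ,
      Tendsto (fun n => gcFn ξ ω n (t m j)) atTop (nhds (gcF P (ξ 0) (t m j))) ∧
      Tendsto (fun n => gcGn ξ ω n (t m j)) atTop (nhds (gcG P (ξ 0) (t m j))) := by
    rw [ae_all_iff]
    intro m
    rw [ae_all_iff]
    intro j
    exact (hslnGT (t m j)).and (hslnGE (t m j))
  filter_upwards [hAS] with ω hω δ hδ
  obtain ⟨m, hm⟩ := exists_nat_ge (2/δ)
  have hδ' : (0:ℝ) < 1/((m:ℝ)+1) := by positivity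
  set δ' : ℝ := 1/((m:ℝ)+1) with hδ'def
  have h2δ : 2*δ' ≤ δ := by
    have h1 : (0:ℝ) < 2/δ := by positivity
    have h2 : 2/δ ≤ (m:ℝ)+1 := le_trans hm (by linarith)
    have h3 : δ' ≤ δ/2 := by
      rw [hδ'def, show δ/2 = 1/(2/δ) by field_simp]
      exact one_div_le_one_div_of_le h1 h2
    linarith
  have hev : ∀ᶠ n in atTop, ∀ j ∈ Finset.range (k m + 1),
      |gcFn ξ ω n (t m j) - gcF P (ξ 0) (t m j)| ≤ δ' ∧
      |gcGn ξ ω n (t m j) - gcG P (ξ 0) (t m j)| ≤ δ' := by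
    rw [Filter.eventually_all_finset]
    intro j _
    have h1 : Tendsto (fun n => gcFn ξ ω n (t m j) - gcF P (ξ 0) (t m j)) atTop (nhds 0) := by
      simpa using (hω m j).1.sub (tendsto_const_nhds (x := gcF P (ξ 0) (t m j)))
    have h2 : Tendsto (fun n => gcGn ξ ω n (t m j) - gcG P (ξ 0) (t m j)) atTop (nhds 0) := by
      simpa using (hω m j).2.sub (tendsto_const_nhds (x := gcG P (ξ 0) (t m j)))
    have h1' : Tendsto (fun nn => |gcFn ξ ω nn (t m j) - gcF P (ξ 0) (t m j)|) atTop (nhds 0) := by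
      simpa using h1.abs
    have h2' : Tendsto (fun nn => |gcGn ξ ω nn (t m j) - gcG P (ξ 0) (t m j)|) atTop (nhds 0) := by
      simpa using h2.abs
    have e1 := (h1'.eventually_lt_const hδ').mono (fun n h => le_of_lt h)
    have e2 := (h2'.eventually_lt_const hδ').mono (fun n h => le_of_lt h)
    exact e1.and e2
  obtain ⟨N, hN⟩ := eventually_atTop.mp hev
  refine ⟨N, fun n hn s => ?_⟩
  have hgrid : ∀ j ≤ k m,
      |gcFn ξ ω n (t m j) - gcF P (ξ 0) (t m j)| ≤ δ' ∧
      |gcGn ξ ω n (t m j) - gcG P (ξ 0) (t m j)| ≤ δ' :=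
    fun j hj => hN n hn j (Finset.mem_range.mpr (by omega))
  -- empirical pointwise facts
  have pFanti : ∀ s s' : ℝ, s ≤ s' → gcFn ξ ω n s' ≤ gcFn ξ ω n s := by
    intro s s' h
    simp only [gcFn, div_eq_mul_inv]
    refine mul_le_mul_of_nonneg_right (Finset.sum_le_sum fun i _ => ?_) (by positivity)
    exact mul_le_mul_of_nonneg_left (ind_mono fun hlt => lt_of_le_of_lt h hlt) (hφ i ω).1
  have pF0 : ∀ s : ℝ, 0 ≤ gcFn ξ ω n s := fun s =>
    div_nonneg (Finset.sum_nonneg fun i _ => mul_nonneg (hφ i ω).1 (ind_nonneg _))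
      (Nat.cast_nonneg n)
  have pGnFn : ∀ s t' : ℝ, s < t' → gcGn ξ ω n t' ≤ gcFn ξ ω n s := by
    intro s t' h
    simp only [gcFn, gcGn, div_eq_mul_inv]
    refine mul_le_mul_of_nonneg_right (Finset.sum_le_sum fun i _ => ?_) (by positivity)
    exact mul_le_mul_of_nonneg_left (ind_mono fun hle => lt_of_lt_of_le h hle) (hφ i ω).1
  have claimGT : ∀ s : ℝ, |gcFn ξ ω n s - gcF P (ξ 0) s| ≤ 2*δ' := by
    intro s
    rcases lt_or_ge s (t m 0) with hcase | hcase
    · have hsneg : s < -1 := by rwa [ht0 m] at hcase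
      have e1 : gcFn ξ ω n s = gcFn ξ ω n (t m 0) := by
        rw [ht0 m]
        simp only [gcFn]
        congr 1
        refine Finset.sum_congr rfl fun i _ => ?_
        have hτi := hτ i ω
        rw [if_pos (by linarith : s < (ξ i ω).1), if_pos (by linarith : (-1:ℝ) < (ξ i ω).1)]
      have e2 : gcF P (ξ 0) s = gcF P (ξ 0) (t m 0) := by
        rw [ht0 m]
        simp only [gcF]
        refine integral_congr_ae (ae_of_all _ fun ω' => ?_)
        have hτ0 := hτ 0 ω'
        show (ξ 0 ω').2 * (if s < (ξ 0 ω').1 then (1:ℝ) else 0) =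
          (ξ 0 ω').2 * (if (-1:ℝ) < (ξ 0 ω').1 then 1 else 0)
        rw [if_pos (by linarith : s < (ξ 0 ω').1), if_pos (by linarith : (-1:ℝ) < (ξ 0 ω').1)]
      rw [e1, e2]
      exact le_trans (hgrid 0 (Nat.zero_le _)).1 (by linarith)
    rcases lt_or_ge s (t m (k m)) with hcase2 | hcase2
    · obtain ⟨j, hjk, hj1, hj2⟩ := find_interval (t m) (k m) (htmono m) s hcase hcase2
      obtain ⟨hFs_low, hFs_high⟩ := htint m j hjk s hj1 hj2
      have hj' := (hgrid j hjk.le).1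
      have hj1' := (hgrid (j+1) (by omega)).2
      have u1 : gcFn ξ ω n s ≤ gcFn ξ ω n (t m j) := pFanti _ _ hj1
      have u2 := (abs_le.mp hj').2
      have u3 := (abs_le.mp hj1').1
      have u4 : gcGn ξ ω n (t m (j+1)) ≤ gcFn ξ ω n s := pGnFn _ _ hj2
      rw [abs_le]
      constructor
      · -- gcF s - gcFn s ≤ 2δ' i.e. -(2δ') ≤ gcFn s - gcF s
        have : gcF P (ξ 0) s ≤ gcG P (ξ 0) (t m (j+1)) + δ' := hFs_high
        linarith
      · have : gcF P (ξ 0) (t m j) - δ' ≤ gcF P (ξ 0) s := hFs_low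
        linarith
    · have h1 : gcF P (ξ 0) s ≤ δ' := le_trans (hFanti _ _ hcase2) (htlast m)
      have h2 : gcFn ξ ω n s ≤ 2*δ' := by
        have h3 := (abs_le.mp (hgrid (k m) le_rfl).1).2
        have h4 := htlast m
        have h5 := pFanti _ _ hcase2
        linarith
      rw [abs_le]
      constructor
      · have := pF0 s
        linarith
      · have := hF0 s
        linarith
  have claimGE : ∀ s : ℝ, |gcGn ξ ω n s - gcG P (ξ 0) s| ≤ 2*δ' := by
    intro s
    have h1 : Tendsto (fun l : ℕ => gcFn ξ ω n (s - 1/(l+1))) atTop (nhds (gcGn ξ ω n s)) := by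
      simp only [gcFn, gcGn]
      exact Tendsto.div_const (tendsto_finset_sum _ fun i _ =>
        ((tendsto_ind_left s ((ξ i ω).1)).const_mul ((ξ i ω).2))) _
    have h3 := (h1.sub (hleft s)).abs
    exact le_of_tendsto h3 (Eventually.of_forall fun l => claimGT _)
  exact ⟨le_trans (claimGT s) (by linarith), le_trans (claimGE s) (by linarith)⟩


lemma ind_nonneg' (c : Prop) [Decidable c] : (0:ℝ) ≤ if c then 1 else 0 := by
  split <;> norm_num

lemma ind_and (A B : Prop) [Decidable A] [Decidable B] :
    (if A ∧ B then (1:ℝ) else 0) = (if A then 1 else 0) * (if B then 1 else 0) := by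
  by_cases hA : A <;> by_cases hB : B <;> simp [hA, hB]

lemma sum_ne_split {n : ℕ} (f : ℕ → ℕ → ℝ) :
    ∑ i ∈ Finset.range n, ∑ j ∈ Finset.range n, (if i ≠ j then f i j else 0) =
      ∑ i ∈ Finset.range n, ∑ j ∈ Finset.range n, (if i < j then (f i j + f j i) else 0) := by
  have h1 : ∀ i j : ℕ, (if i ≠ j then f i j else 0) =
      (if i < j then f i j else 0) + (if j < i then f i j else 0) := by
    intro i j
    rcases lt_trichotomy i j with h | h | h
    · simp [h, Nat.lt_asymm h, h.ne]
    · simp [h]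
    · simp [h, Nat.lt_asymm h, h.ne', (Ne.symm h.ne)]
  have h2 : ∀ i j : ℕ, (if i < j then (f i j + f j i) else 0) =
      (if i < j then f i j else 0) + (if i < j then f j i else 0) := by
    intro i j; split <;> simp
  simp_rw [h1, h2, Finset.sum_add_distrib]
  congr 1
  rw [Finset.sum_comm]
lemma sum_ne_diag {n : ℕ} (i : ℕ) (hi : i ∈ Finset.range n) (x : ℕ → ℝ) :
    ∑ j ∈ Finset.range n, (if i ≠ j then x j else 0) = (∑ j ∈ Finset.range n, x j) - x i := by
  have h1 : ∀ j : ℕ, (if i ≠ j then x j else 0) = x j - (if j = i then x j else 0) := by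
    intro j
    by_cases h : j = i
    · simp [h]
    · simp [h, Ne.symm h]
  rw [Finset.sum_congr rfl (fun j _ => h1 j), Finset.sum_sub_distrib,
    Finset.sum_ite_eq' (Finset.range n) i x, if_pos hi]

lemma ind_integral_repr {a Mv : ℝ} (h1 : 1 ≤ a) (h2 : a ≤ Mv) :
    a = 1 + ∫ u in Set.Ioc (0:ℝ) (Mv-1), (if 1 + u < a then (1:ℝ) else 0) := by
  have heq : (fun u : ℝ => if 1 + u < a then (1:ℝ) else 0) =
      fun u => Set.indicator (Set.Iio (a-1)) (fun _ => (1:ℝ)) u := by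
    funext u
    by_cases h : 1 + u < a
    · rw [if_pos h, Set.indicator_of_mem (by simp [Set.mem_Iio]; linarith)]
    · rw [if_neg h, Set.indicator_of_notMem (by simp [Set.mem_Iio]; linarith)]
  rw [heq, MeasureTheory.setIntegral_indicator measurableSet_Iio]
  have hset : Set.Ioc (0:ℝ) (Mv-1) ∩ Set.Iio (a-1) = Set.Ioo 0 (a-1) := by
    ext u
    simp only [Set.mem_inter_iff, Set.mem_Ioc, Set.mem_Iio, Set.mem_Ioo]
    constructor
    · rintro ⟨⟨hu1, _⟩, hu3⟩; exact ⟨hu1, hu3⟩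
    · rintro ⟨hu1, hu2⟩; exact ⟨⟨hu1, by linarith⟩, hu2⟩
  rw [hset, MeasureTheory.setIntegral_const,
    Real.volume_real_Ioo_of_le (by linarith : (0:ℝ) ≤ a - 1), smul_eq_mul, mul_one]
  ring


lemma abs_add_four (x1 x2 x3 x4 : ℝ) : |x1 + x2 + x3 + x4| ≤ |x1| + |x2| + |x3| + |x4| := by
  calc |x1 + x2 + x3 + x4| ≤ |x1 + x2 + x3| + |x4| := abs_add_le _ _
    _ ≤ (|x1 + x2| + |x3|) + |x4| := add_le_add_left (abs_add_le _ _) _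
    _ ≤ ((|x1| + |x2|) + |x3|) + |x4| := add_le_add_left (add_le_add_left (abs_add_le _ _) _) _
    _ = |x1| + |x2| + |x3| + |x4| := by ring

set_option maxHeartbeats 2000000 in
/-- **Uniform a.s. convergence of the symmetrised denominator of time-dependent Uno's
C-index over the class `𝒢_ε`.**  `ζ i = (Zᵢ, Tᵢ, Dᵢ)` is an i.i.d. sequence of
(covariate, event time, censoring time) triples with `D₁` independent of `(Z₁, T₁)`,
all event times lying in `[0, Tmax)`.  Then
`sup_{g ∈ 𝒢_ε} |(2/(n(n−1))) Σ_{i<j} ψ̄^g(xᵢ, xⱼ) − E[ψ̄^g(x₁, x₂)]| → 0` a.s. -/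
theorem stmt_3 {Ω : Type*} [MeasurableSpace Ω] (P : Measure Ω) [IsProbabilityMeasure P]
    {E : Type*} [MeasurableSpace E]
    (S : ℝ → E → ℝ) (hSmeas : Measurable fun p : ℝ × E => S p.1 p.2)
    (hS01 : ∀ t z, S t z ∈ Set.Icc (0 : ℝ) 1)
    (Tmax : ℝ) (hTmax : 0 < Tmax)
    (ζ : ℕ → Ω → E × ℝ × ℝ)
    (hmeas : ∀ i, Measurable (ζ i))
    (hident : ∀ i, P.map (ζ i) = P.map (ζ 0))
    (hindep : iIndepFun ζ P)
    (hTrange : ∀ i ω, (ζ i ω).2.1 ∈ Set.Ico (0 : ℝ) Tmax)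
    (hDnonneg : ∀ i ω, 0 ≤ (ζ i ω).2.2)
    (hDindep : IndepFun (fun ω => ((ζ 0 ω).1, (ζ 0 ω).2.1)) (fun ω => (ζ 0 ω).2.2) P)
    (ε : ℝ) (hε : 0 < ε) :
    ∀ᵐ ω ∂P, Tendsto (fun n : ℕ =>
        ⨆ g : {g : ℝ → ℝ // memG ε Tmax g},
          |(2 / (n * (n - 1) : ℝ)) *
              (∑ i ∈ Finset.range n, ∑ j ∈ Finset.range n,
                if i < j then psibar g.1 (ζ i ω) (ζ j ω) else 0) -
            ∫ ω' , psibar g.1 (ζ 0 ω') (ζ 1 ω') ∂P|)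
      atTop (nhds 0) := by
  classical
  have hmT : ∀ i : ℕ, Measurable fun ω => (ζ i ω).2.1 := fun i => ((hmeas i).snd).fst
  have hmD : ∀ i : ℕ, Measurable fun ω => (ζ i ω).2.2 := fun i => ((hmeas i).snd).snd
  -- first empirical process : the censoring-survival of X = min(T,D)
  set f1 : E × ℝ × ℝ → ℝ × ℝ := fun x => (min x.2.1 x.2.2, 1) with hf1def
  have hf1 : Measurable f1 :=
    ((measurable_fst.comp measurable_snd).min (measurable_snd.comp measurable_snd)).prodMk
      measurable_const
  set ξ1 : ℕ → Ω → ℝ × ℝ := fun i ω => f1 (ζ i ω) with hξ1def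
  have hmeas1 : ∀ i, Measurable (ξ1 i) := fun i => hf1.comp (hmeas i)
  have hident1 : ∀ i, P.map (ξ1 i) = P.map (ξ1 0) := fun i => by
    show P.map (f1 ∘ ζ i) = P.map (f1 ∘ ζ 0)
    rw [← Measure.map_map hf1 (hmeas i), ← Measure.map_map hf1 (hmeas 0), hident i]
  have hindep1 : Pairwise fun i j => IndepFun (ξ1 i) (ξ1 j) P := fun i j hij =>
    (hindep.indepFun hij).comp hf1 hf1
  have hτ1 : ∀ i ω', 0 ≤ (ξ1 i ω').1 := fun i ω' =>
    le_min (hTrange i ω').1 (hDnonneg i ω')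
  have hφ1 : ∀ i ω', (ξ1 i ω').2 ∈ Set.Icc (0:ℝ) 1 := fun i ω' => by
    simp [hξ1def, hf1def]
  set W : ℝ → ℝ := gcF P (ξ1 0) with hWdef
  have hintW : ∀ s : ℝ, Integrable
      (fun ω' => (ξ1 0 ω').2 * (if s < (ξ1 0 ω').1 then (1:ℝ) else 0)) P := by
    intro s
    refine ⟨(((hmeas1 0).snd).mul (Measurable.ite
      (measurableSet_lt measurable_const ((hmeas1 0).fst)) measurable_const
      measurable_const)).aestronglyMeasurable, ?_⟩
    exact HasFiniteIntegral.of_bounded (C := 1)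
      (ae_of_all _ fun ω' => mulind_bound (hφ1 0 ω') _)
  have hW01 : ∀ s : ℝ, W s ∈ Set.Icc (0:ℝ) 1 := by
    intro s
    constructor
    · exact integral_nonneg fun ω' => mul_nonneg (hφ1 0 ω').1 (ind_nonneg _)
    · calc W s ≤ ∫ _ω', (1:ℝ) ∂P := by
            refine integral_mono (hintW s) (integrable_const 1) fun ω' => ?_
            calc (ξ1 0 ω').2 * (if s < (ξ1 0 ω').1 then (1:ℝ) else 0) ≤ 1 * 1 := by
                  apply mul_le_mul (hφ1 0 ω').2 (ind_le_one _) (ind_nonneg _) zero_le_one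
              _ = 1 := by norm_num
        _ = 1 := by simp
  have hWanti : Antitone W := by
    intro s t hst
    refine integral_mono (hintW t) (hintW s) fun ω' => ?_
    exact mul_le_mul_of_nonneg_left (ind_mono fun h => lt_of_le_of_lt hst h) (hφ1 0 ω').1
  have hWmeas : Measurable W := hWanti.measurable
  -- second empirical process : φ = 1{T < D}·W(T) at time T
  set φfun : E × ℝ × ℝ → ℝ := fun x => (if x.2.1 < x.2.2 then (1:ℝ) else 0) * W x.2.1
    with hφfundef
  have hφfunmeas : Measurable φfun :=
    (Measurable.ite (measurableSet_lt (measurable_fst.comp measurable_snd)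
        (measurable_snd.comp measurable_snd)) measurable_const measurable_const).mul
      (hWmeas.comp (measurable_fst.comp measurable_snd))
  have hφfun01 : ∀ x, φfun x ∈ Set.Icc (0:ℝ) 1 := by
    intro x
    constructor
    · exact mul_nonneg (ind_nonneg _) (hW01 _).1
    · calc (if x.2.1 < x.2.2 then (1:ℝ) else 0) * W x.2.1 ≤ 1 * 1 :=
            mul_le_mul (ind_le_one _) (hW01 _).2 (hW01 _).1 zero_le_one
        _ = 1 := by norm_num
  set f2 : E × ℝ × ℝ → ℝ × ℝ := fun x => (x.2.1, φfun x) with hf2def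
  have hf2 : Measurable f2 := (measurable_fst.comp measurable_snd).prodMk hφfunmeas
  set ξ2 : ℕ → Ω → ℝ × ℝ := fun i ω => f2 (ζ i ω) with hξ2def
  have hmeas2 : ∀ i, Measurable (ξ2 i) := fun i => hf2.comp (hmeas i)
  have hident2 : ∀ i, P.map (ξ2 i) = P.map (ξ2 0) := fun i => by
    show P.map (f2 ∘ ζ i) = P.map (f2 ∘ ζ 0)
    rw [← Measure.map_map hf2 (hmeas i), ← Measure.map_map hf2 (hmeas 0), hident i]
  have hindep2 : Pairwise fun i j => IndepFun (ξ2 i) (ξ2 j) P := fun i j hij =>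
    (hindep.indepFun hij).comp hf2 hf2
  have hτ2 : ∀ i ω', 0 ≤ (ξ2 i ω').1 := fun i ω' => (hTrange i ω').1
  have hφ2 : ∀ i ω', (ξ2 i ω').2 ∈ Set.Icc (0:ℝ) 1 := fun i ω' => hφfun01 _
  have hGC1 := unif_gc P ξ1 hmeas1 hident1 hindep1 1 hτ1 hφ1
  have hGC2 := unif_gc P ξ2 hmeas2 hident2 hindep2 1 hτ2 hφ2
  filter_upwards [hGC1, hGC2] with ω hω1 hω2
  rw [Metric.tendsto_atTop]
  intro δ hδ
  set M : ℝ := (ε^2)⁻¹ with hMdef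
  have hM0 : 0 < M := by rw [hMdef]; positivity
  set δ₀ : ℝ := δ/(8*(M+1)) with hδ₀def
  have hδ₀ : 0 < δ₀ := by rw [hδ₀def]; positivity
  obtain ⟨N₁, hN₁⟩ := hω1 δ₀ hδ₀
  obtain ⟨N₂, hN₂⟩ := hω2 δ₀ hδ₀
  obtain ⟨N₃, hN₃⟩ := exists_nat_ge (8*M/δ + 2)
  refine ⟨max (max N₁ N₂) (max N₃ 2), fun n hn => ?_⟩
  have hnN₁ : N₁ ≤ n := le_trans (le_trans (le_max_left _ _) (le_max_left _ _)) hn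
  have hnN₂ : N₂ ≤ n := le_trans (le_trans (le_max_right _ _) (le_max_left _ _)) hn
  have hn2 : 2 ≤ n := le_trans (le_trans (le_max_right _ _) (le_max_right _ _)) hn
  have hnN₃ : N₃ ≤ n := le_trans (le_trans (le_max_left _ _) (le_max_right _ _)) hn
  have hn2R : (2:ℝ) ≤ (n:ℝ) := by exact_mod_cast hn2
  have hn1 : (0:ℝ) < (n:ℝ) - 1 := by linarith
  have hn0 : (0:ℝ) < (n:ℝ) := by linarith
  have hnR : (8*M/δ + 2) ≤ (n:ℝ) := le_trans hN₃ (by exact_mod_cast hnN₃)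
  have hMn : 2*M/((n:ℝ)-1) ≤ δ/4 := by
    rw [div_le_iff₀ hn1]
    have h8 : δ * (8*M/δ) = 8*M := by field_simp
    have h9 : δ * (8*M/δ + 1) ≤ δ * ((n:ℝ) - 1) :=
      mul_le_mul_of_nonneg_left (by linarith) hδ.le
    nlinarith
  -- the key bound, uniform over g
  have key : ∀ g : {g : ℝ → ℝ // memG ε Tmax g},
      |(2 / (n * (n - 1) : ℝ)) *
          (∑ i ∈ Finset.range n, ∑ j ∈ Finset.range n,
            if i < j then psibar g.1 (ζ i ω) (ζ j ω) else 0) -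
        ∫ ω', psibar g.1 (ζ 0 ω') (ζ 1 ω') ∂P| ≤ 3*δ/4 := by
    intro g
    obtain ⟨hg0, hgIcc, hgmono, _⟩ := g.2
    have hε1 : ε ≤ 1 := by
      have h := hgIcc 0 ⟨le_refl 0, hTmax⟩
      rw [hg0] at h
      exact h.1
    have hM1 : 1 ≤ M := by
      rw [hMdef]
      have h1 : (0:ℝ) < ε^2 := by positivity
      have h2 : ε^2 ≤ 1 := by nlinarith
      simpa using inv_anti₀ h1 h2
    set H : ℝ → ℝ := fun t' => if t' < 0 then 1 else if t' < Tmax then ((g.1 t')^2)⁻¹ else M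
      with hHdef
    have hgpos : ∀ t' ∈ Set.Ico (0:ℝ) Tmax, 0 < g.1 t' := fun t' ht' =>
      lt_of_lt_of_le hε (hgIcc t' ht').1
    have hHval : ∀ t' ∈ Set.Ico (0:ℝ) Tmax, H t' = ((g.1 t')^2)⁻¹ := by
      intro t' ht'
      rw [hHdef]
      simp only
      rw [if_neg (not_lt.mpr ht'.1), if_pos ht'.2]
    have hsq : ∀ t' ∈ Set.Ico (0:ℝ) Tmax, ((g.1 t')^2)⁻¹ ∈ Set.Icc (1:ℝ) M := by
      intro t' ht'
      have h1 := (hgIcc t' ht').1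
      have h2 := (hgIcc t' ht').2
      have hg' := hgpos t' ht'
      have h3 : 0 < (g.1 t')^2 := by positivity
      constructor
      · have h4 : (g.1 t')^2 ≤ 1 := by nlinarith
        simpa using inv_anti₀ h3 h4
      · rw [hMdef]
        exact inv_anti₀ (by positivity) (by nlinarith)
    have hHrange : ∀ t', H t' ∈ Set.Icc (1:ℝ) M := by
      intro t'
      rw [hHdef]
      simp only
      split_ifs with h1 h2
      · exact ⟨le_refl 1, hM1⟩
      · exact hsq t' ⟨not_lt.mp h1, h2⟩
      · exact ⟨hM1, le_refl M⟩
    have hHmono : Monotone H := by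
      intro u v huv
      rcases lt_or_ge u 0 with hu | hu
      · have h1 : H u = 1 := by rw [hHdef]; simp only; rw [if_pos hu]
        rw [h1]; exact (hHrange v).1
      rcases lt_or_ge v Tmax with hv | hv
      · have hu' : u ∈ Set.Ico (0:ℝ) Tmax := ⟨hu, lt_of_le_of_lt huv hv⟩
        have hv' : v ∈ Set.Ico (0:ℝ) Tmax := ⟨le_trans hu huv, hv⟩
        rw [hHval u hu', hHval v hv']
        have hgv := hgpos v hv'
        have hmono := hgmono u hu' v hv' huv
        exact inv_anti₀ (by positivity) (by nlinarith [(hgIcc v hv').1])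
      · have h1 : H v = M := by
          rw [hHdef]; simp only
          rw [if_neg (not_lt.mpr (le_trans hTmax.le hv)), if_neg (not_lt.mpr hv)]
        rw [h1]; exact (hHrange u).2
    have hHmeas : Measurable H := hHmono.measurable
    -- per-observation quantities
    set Ti : ℕ → ℝ := fun i => (ζ i ω).2.1 with hTidef
    set φs : ℕ → ℝ := fun i => φfun (ζ i ω) with hφsdef
    set a : ℕ → ℝ := fun i =>
      (if (ζ i ω).2.1 < (ζ i ω).2.2 then (1:ℝ) else 0) * H ((ζ i ω).2.1) with hadef
    set b : ℕ → ℕ → ℝ := fun i j =>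
      if (ζ i ω).2.1 < min (ζ j ω).2.1 (ζ j ω).2.2 then (1:ℝ) else 0 with hbdef
    have ha01 : ∀ i, a i ∈ Set.Icc (0:ℝ) M := by
      intro i
      rw [hadef]
      simp only
      constructor
      · exact mul_nonneg (ind_nonneg _) (le_trans zero_le_one (hHrange _).1)
      · calc (if (ζ i ω).2.1 < (ζ i ω).2.2 then (1:ℝ) else 0) * H ((ζ i ω).2.1) ≤ 1 * M :=
              mul_le_mul (ind_le_one _) (hHrange _).2
                (le_trans zero_le_one (hHrange _).1) zero_le_one
          _ = M := one_mul M
    have hb01 : ∀ i j, b i j ∈ Set.Icc (0:ℝ) 1 := by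
      intro i j
      rw [hbdef]
      exact ⟨ind_nonneg _, ind_le_one _⟩
    have hpsik : ∀ i j : ℕ, psiker g.1 (ζ i ω) (ζ j ω) = a i * b i j := by
      intro i j
      simp only [psiker, hadef, hbdef]
      rw [ind_and, ← hHval _ (hTrange i ω)]
      ring
    have hpsib : ∀ i j : ℕ, psibar g.1 (ζ i ω) (ζ j ω) = (a i * b i j + a j * b j i)/2 := by
      intro i j
      simp only [psibar]
      rw [hpsik i j, hpsik j i]
    set q : ℝ := (n:ℝ) * ((n:ℝ) - 1) with hqdef
    have hq0 : 0 < q := by rw [hqdef]; exact mul_pos hn0 hn1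
    set Sb : ℕ → ℝ := fun i => ∑ j ∈ Finset.range n, b i j with hSbdef
    have hstat : (2 / ((n:ℝ) * ((n:ℝ) - 1))) *
        (∑ i ∈ Finset.range n, ∑ j ∈ Finset.range n,
          if i < j then psibar g.1 (ζ i ω) (ζ j ω) else 0)
        = (∑ i ∈ Finset.range n, (a i * Sb i - a i * b i i)) / q := by
      have h1 : (∑ i ∈ Finset.range n, ∑ j ∈ Finset.range n,
          if i < j then psibar g.1 (ζ i ω) (ζ j ω) else 0)
          = (∑ i ∈ Finset.range n, ∑ j ∈ Finset.range n,
              if i < j then (a i * b i j + a j * b j i) else 0) / 2 := by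
        rw [Finset.sum_div]
        refine Finset.sum_congr rfl fun i _ => ?_
        rw [Finset.sum_div]
        refine Finset.sum_congr rfl fun j _ => ?_
        rw [hpsib]
        split_ifs with h
        · rfl
        · simp
      have h2 : (∑ i ∈ Finset.range n, ∑ j ∈ Finset.range n,
          if i < j then (a i * b i j + a j * b j i) else 0)
          = ∑ i ∈ Finset.range n, (a i * Sb i - a i * b i i) := by
        rw [← sum_ne_split (fun i j => a i * b i j)]
        refine Finset.sum_congr rfl fun i hi => ?_
        rw [sum_ne_diag i hi (fun j => a i * b i j), ← Finset.mul_sum, hSbdef]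
      rw [h1, h2, hqdef]
      field_simp
    have hSbW : ∀ i, |Sb i - (n:ℝ) * W (Ti i)| ≤ (n:ℝ) * δ₀ := by
      intro i
      have h1 := (hN₁ n hnN₁ (Ti i)).1
      have h2 : gcFn ξ1 ω n (Ti i) = Sb i / n := by
        simp only [gcFn, hSbdef, hbdef, hξ1def, hf1def, hTidef, one_mul]
      rw [h2, ← hWdef] at h1
      have h3 : Sb i - (n:ℝ) * W (Ti i) = (n:ℝ) * (Sb i / n - W (Ti i)) := by
        field_simp
      rw [h3, abs_mul, abs_of_nonneg hn0.le]
      exact mul_le_mul_of_nonneg_left h1 hn0.le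
    set SW : ℝ := ∑ i ∈ Finset.range n, a i * W (Ti i) with hSWdef
    have hSWbd : |SW| ≤ (n:ℝ) * M := by
      rw [hSWdef]
      calc |∑ i ∈ Finset.range n, a i * W (Ti i)|
          ≤ ∑ i ∈ Finset.range n, |a i * W (Ti i)| := Finset.abs_sum_le_sum_abs _ _
        _ ≤ ∑ _i ∈ Finset.range n, M := by
            refine Finset.sum_le_sum fun i _ => ?_
            rw [abs_mul, abs_of_nonneg (ha01 i).1, abs_of_nonneg (hW01 _).1]
            calc a i * W (Ti i) ≤ M * 1 :=
                  mul_le_mul (ha01 i).2 (hW01 _).2 (hW01 _).1 hM0.le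
              _ = M := mul_one M
        _ = (n:ℝ) * M := by rw [Finset.sum_const, Finset.card_range, nsmul_eq_mul]
    have hmain1 : |(∑ i ∈ Finset.range n, a i * Sb i)/q - SW/((n:ℝ)-1)| ≤ 2*M*δ₀ := by
      have e : SW/((n:ℝ)-1) = (∑ i ∈ Finset.range n, a i * ((n:ℝ) * W (Ti i)))/q := by
        have e2 : ∑ i ∈ Finset.range n, a i * ((n:ℝ) * W (Ti i))
            = (n:ℝ) * ∑ i ∈ Finset.range n, a i * W (Ti i) := by
          rw [Finset.mul_sum]
          exact Finset.sum_congr rfl fun i _ => by ring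
        rw [e2, hqdef, ← hSWdef, mul_div_mul_left _ _ hn0.ne']
      rw [e, div_sub_div_same, ← Finset.sum_sub_distrib, abs_div, abs_of_pos hq0]
      have hterm : ∀ i ∈ Finset.range n,
          |a i * Sb i - a i * ((n:ℝ) * W (Ti i))| ≤ M * ((n:ℝ)*δ₀) := by
        intro i _
        rw [← mul_sub, abs_mul, abs_of_nonneg (ha01 i).1]
        exact mul_le_mul (ha01 i).2 (hSbW i) (abs_nonneg _) hM0.le
      calc |∑ i ∈ Finset.range n, (a i * Sb i - a i * ((n:ℝ) * W (Ti i)))| / q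
          ≤ (∑ i ∈ Finset.range n, |a i * Sb i - a i * ((n:ℝ) * W (Ti i))|) / q := by
            gcongr
            exact Finset.abs_sum_le_sum_abs _ _
        _ ≤ (∑ _i ∈ Finset.range n, M * ((n:ℝ)*δ₀)) / q := by
            gcongr with i hi
            exact hterm i hi
        _ = ((n:ℝ) * (M * ((n:ℝ)*δ₀))) / q := by
            rw [Finset.sum_const, Finset.card_range, nsmul_eq_mul]
        _ ≤ 2*M*δ₀ := by
            rw [div_le_iff₀ hq0, hqdef]
            have hq2 : (0:ℝ) ≤ M*δ₀*((n:ℝ)*((n:ℝ)-2)) :=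
              mul_nonneg (mul_nonneg hM0.le hδ₀.le)
                (mul_nonneg hn0.le (by linarith))
            have e1 : 2*M*δ₀*((n:ℝ)*((n:ℝ)-1)) - (n:ℝ)*(M*((n:ℝ)*δ₀))
                = M*δ₀*((n:ℝ)*((n:ℝ)-2)) := by ring
            linarith
    have hmain2 : |SW/((n:ℝ)-1) - SW/(n:ℝ)| ≤ M/((n:ℝ)-1) := by
      have e : SW/((n:ℝ)-1) - SW/(n:ℝ) = SW/(((n:ℝ)-1)*(n:ℝ)) := by
        field_simp
        try ring
      rw [e, abs_div, abs_of_pos (mul_pos hn1 hn0)]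
      calc |SW|/(((n:ℝ)-1)*(n:ℝ)) ≤ ((n:ℝ)*M)/(((n:ℝ)-1)*(n:ℝ)) := by
            gcongr
        _ = M/((n:ℝ)-1) := by
            rw [show ((n:ℝ)-1)*(n:ℝ) = (n:ℝ)*((n:ℝ)-1) by ring,
              mul_div_mul_left _ _ hn0.ne']
    have hdiag : |(∑ i ∈ Finset.range n, a i * b i i)/q| ≤ M/((n:ℝ)-1) := by
      rw [abs_div, abs_of_pos hq0]
      calc |∑ i ∈ Finset.range n, a i * b i i| / q
          ≤ (∑ i ∈ Finset.range n, |a i * b i i|) / q := by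
            gcongr
            exact Finset.abs_sum_le_sum_abs _ _
        _ ≤ (∑ _i ∈ Finset.range n, M) / q := by
            gcongr with i hi
            rw [abs_mul, abs_of_nonneg (ha01 i).1, abs_of_nonneg (hb01 i i).1]
            calc a i * b i i ≤ M * 1 :=
                  mul_le_mul (ha01 i).2 (hb01 i i).2 (hb01 i i).1 hM0.le
              _ = M := mul_one M
        _ = ((n:ℝ) * M) / q := by rw [Finset.sum_const, Finset.card_range, nsmul_eq_mul]
        _ = M/((n:ℝ)-1) := by rw [hqdef, mul_div_mul_left _ _ hn0.ne']
    -- Step C : |SW/n - EG| ≤ M*δ₀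
    haveI hfinIoc : IsFiniteMeasure (volume.restrict (Set.Ioc (0:ℝ) (M-1))) := ⟨by
      rw [Measure.restrict_apply_univ, Real.volume_Ioc]
      exact ENNReal.ofReal_lt_top⟩
    set EG : ℝ := ∫ ω', φfun (ζ 0 ω') * H ((ζ 0 ω').2.1) ∂P with hEGdef
    have hφζmeas : Measurable fun ω' => φfun (ζ 0 ω') := hφfunmeas.comp (hmeas 0)
    have hHTmeas : Measurable fun ω' => H ((ζ 0 ω').2.1) := hHmeas.comp (hmT 0)
    have hintφ : Integrable (fun ω' => φfun (ζ 0 ω')) P :=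
      ⟨hφζmeas.aestronglyMeasurable, HasFiniteIntegral.of_bounded (C := 1)
        (ae_of_all _ fun ω' => by
          rw [Real.norm_eq_abs, abs_of_nonneg (hφfun01 _).1]
          exact (hφfun01 _).2)⟩
    have hintφind : ∀ u : ℝ, Integrable
        (fun ω' => φfun (ζ 0 ω') * (if 1+u < H ((ζ 0 ω').2.1) then (1:ℝ) else 0)) P := fun u =>
      ⟨(hφζmeas.mul (Measurable.ite (measurableSet_lt measurable_const hHTmeas)
          measurable_const measurable_const)).aestronglyMeasurable,
        HasFiniteIntegral.of_bounded (C := 1)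
          (ae_of_all _ fun ω' => mulind_bound (hφfun01 _) _)⟩
    set Φ : ℝ → ℝ := fun u =>
      ∫ ω', φfun (ζ 0 ω') * (if 1+u < H ((ζ 0 ω').2.1) then (1:ℝ) else 0) ∂P with hΦdef
    have hΦanti : Antitone Φ := fun u u' huu' =>
      integral_mono (hintφind u') (hintφind u) fun ω' =>
        mul_le_mul_of_nonneg_left (ind_mono fun h => by linarith) (hφfun01 _).1
    have hΦbd : ∀ u, ‖Φ u‖ ≤ 1 := by
      intro u
      rw [hΦdef]
      calc ‖∫ ω', φfun (ζ 0 ω') * (if 1+u < H ((ζ 0 ω').2.1) then (1:ℝ) else 0) ∂P‖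
          ≤ 1 * P.real Set.univ :=
            norm_integral_le_of_norm_le_const
              (ae_of_all _ fun ω' => mulind_bound (hφfun01 _) _)
        _ = 1 := by simp
    have hintΦ : Integrable Φ (volume.restrict (Set.Ioc (0:ℝ) (M-1))) :=
      ⟨(hΦanti.measurable).aestronglyMeasurable,
        HasFiniteIntegral.of_bounded (C := 1) (ae_of_all _ hΦbd)⟩
    have hrepr : ∀ c : ℝ, c ∈ Set.Icc (1:ℝ) M →
        c = 1 + ∫ u in Set.Ioc (0:ℝ) (M-1), (if 1 + u < c then (1:ℝ) else 0) := fun c hc =>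
      ind_integral_repr hc.1 hc.2
    have hreprω : ∀ ω', φfun (ζ 0 ω') * H ((ζ 0 ω').2.1)
        = φfun (ζ 0 ω') + ∫ u in Set.Ioc (0:ℝ) (M-1),
            φfun (ζ 0 ω') * (if 1+u < H ((ζ 0 ω').2.1) then (1:ℝ) else 0) := by
      intro ω'
      rw [integral_const_mul]
      conv_lhs => rw [hrepr _ (hHrange ((ζ 0 ω').2.1))]
      ring
    have hintinner : Integrable (fun ω' => ∫ u in Set.Ioc (0:ℝ) (M-1),
        φfun (ζ 0 ω') * (if 1+u < H ((ζ 0 ω').2.1) then (1:ℝ) else 0)) P := by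
      have he : (fun ω' => ∫ u in Set.Ioc (0:ℝ) (M-1),
          φfun (ζ 0 ω') * (if 1+u < H ((ζ 0 ω').2.1) then (1:ℝ) else 0))
          = fun ω' => φfun (ζ 0 ω') * (H ((ζ 0 ω').2.1) - 1) := by
        funext ω'
        rw [integral_const_mul]
        have h := hrepr _ (hHrange ((ζ 0 ω').2.1))
        have h2 : (∫ u in Set.Ioc (0:ℝ) (M-1),
            (if 1 + u < H ((ζ 0 ω').2.1) then (1:ℝ) else 0)) = H ((ζ 0 ω').2.1) - 1 := by
          linarith
        rw [h2]
      rw [he]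
      refine ⟨(hφζmeas.mul (hHTmeas.sub measurable_const)).aestronglyMeasurable,
        HasFiniteIntegral.of_bounded (C := M) (ae_of_all _ fun ω' => ?_)⟩
      have h1 := hφfun01 (ζ 0 ω')
      have h2 := hHrange ((ζ 0 ω').2.1)
      rw [Real.norm_eq_abs, abs_mul, abs_of_nonneg h1.1,
        abs_of_nonneg (by linarith [h2.1] : (0:ℝ) ≤ H ((ζ 0 ω').2.1) - 1)]
      calc φfun (ζ 0 ω') * (H ((ζ 0 ω').2.1) - 1) ≤ 1 * M :=
            mul_le_mul h1.2 (by linarith [h2.2]) (by linarith [h2.1]) zero_le_one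
        _ = M := one_mul M
    have hFub : Integrable (Function.uncurry fun ω' u =>
        φfun (ζ 0 ω') * (if 1+u < H ((ζ 0 ω').2.1) then (1:ℝ) else 0))
        (P.prod (volume.restrict (Set.Ioc (0:ℝ) (M-1)))) := by
      refine ⟨Measurable.aestronglyMeasurable ?_,
        HasFiniteIntegral.of_bounded (C := 1)
          (ae_of_all _ fun p => mulind_bound (hφfun01 _) _)⟩
      exact (hφζmeas.comp measurable_fst).mul
        (Measurable.ite (measurableSet_lt (measurable_const.add measurable_snd)
          (hHTmeas.comp measurable_fst)) measurable_const measurable_const)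
    have hEGsplit : EG = (∫ ω', φfun (ζ 0 ω') ∂P) + ∫ u in Set.Ioc (0:ℝ) (M-1), Φ u := by
      rw [hEGdef, integral_congr_ae (ae_of_all _ hreprω), integral_add hintφ hintinner]
      congr 1
      rw [hΦdef]
      exact integral_integral_swap hFub
    have hreprn : ∀ i : ℕ, a i * W (Ti i) = φs i * H (Ti i) := by
      intro i
      rw [hadef, hφsdef, hφfundef, hTidef]
      simp only
      ring
    set Φn : ℝ → ℝ := fun u =>
      (∑ i ∈ Finset.range n, φs i * (if 1+u < H (Ti i) then (1:ℝ) else 0))/(n:ℝ) with hΦndef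
    have hintterm : ∀ i : ℕ, Integrable
        (fun u : ℝ => φs i * (if 1+u < H (Ti i) then (1:ℝ) else 0))
        (volume.restrict (Set.Ioc (0:ℝ) (M-1))) := fun i =>
      ⟨(measurable_const.mul (Measurable.ite
          (measurableSet_lt (measurable_const.add measurable_id) measurable_const)
          measurable_const measurable_const)).aestronglyMeasurable,
        HasFiniteIntegral.of_bounded (C := 1)
          (ae_of_all _ fun u => mulind_bound (by rw [hφsdef]; exact hφfun01 _) _)⟩
    have hintΦn : Integrable Φn (volume.restrict (Set.Ioc (0:ℝ) (M-1))) := by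
      rw [hΦndef]
      exact (integrable_finset_sum _ fun i _ => hintterm i).div_const _
    have hQnsplit : SW/(n:ℝ) = (∑ i ∈ Finset.range n, φs i)/(n:ℝ)
        + ∫ u in Set.Ioc (0:ℝ) (M-1), Φn u := by
      have h1 : SW = ∑ i ∈ Finset.range n, (φs i + ∫ u in Set.Ioc (0:ℝ) (M-1),
          φs i * (if 1+u < H (Ti i) then (1:ℝ) else 0)) := by
        rw [hSWdef]
        refine Finset.sum_congr rfl fun i _ => ?_
        rw [hreprn i, integral_const_mul]
        conv_lhs => rw [hrepr _ (hHrange (Ti i))]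
        ring
      rw [h1, Finset.sum_add_distrib, add_div]
      congr 1
      rw [← integral_finset_sum _ (fun i _ => hintterm i), ← integral_div]
    have hA : |(∑ i ∈ Finset.range n, φs i)/(n:ℝ) - ∫ ω', φfun (ζ 0 ω') ∂P| ≤ δ₀ := by
      have h1 := (hN₂ n hnN₂ (-1)).1
      have h2 : gcFn ξ2 ω n (-1) = (∑ i ∈ Finset.range n, φs i)/(n:ℝ) := by
        simp only [gcFn, hξ2def, hf2def, hφsdef]
        congr 1
        refine Finset.sum_congr rfl fun i _ => ?_
        rw [if_pos (lt_of_lt_of_le (by norm_num) (hTrange i ω).1), mul_one]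
      have h3 : gcF P (ξ2 0) (-1) = ∫ ω', φfun (ζ 0 ω') ∂P := by
        simp only [gcF, hξ2def, hf2def]
        refine integral_congr_ae (ae_of_all _ fun ω' => ?_)
        show φfun (ζ 0 ω') * (if (-1:ℝ) < (ζ 0 ω').2.1 then (1:ℝ) else 0) = φfun (ζ 0 ω')
        rw [if_pos (lt_of_lt_of_le (by norm_num) (hTrange 0 ω').1), mul_one]
      rw [← h2, ← h3]
      exact h1
    have hB : ∀ u ∈ Set.Ioc (0:ℝ) (M-1), ‖Φn u - Φ u‖ ≤ δ₀ := by
      intro u hu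
      set Su : Set ℝ := {r | 1 + u < H r} with hSudef
      have hup : ∀ r r' : ℝ, r ∈ Su → r ≤ r' → r' ∈ Su := fun r r' hr hle =>
        lt_of_lt_of_le hr (hHmono hle)
      by_cases hSne : Su.Nonempty
      · have hSbdd : BddBelow Su := by
          refine ⟨-1, fun r hr => ?_⟩
          by_contra hcon
          push_neg at hcon
          have h1 : H r = 1 := by rw [hHdef]; simp only; rw [if_pos (by linarith)]
          have h2 : 1 + u < 1 := by
            have h3 : 1 + u < H r := hr
            rw [h1] at h3
            exact h3
          linarith [hu.1]
        by_cases hmem : sInf Su ∈ Su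
        · have hiff : ∀ r : ℝ, (1 + u < H r) ↔ (sInf Su ≤ r) := fun r =>
            ⟨fun h => csInf_le hSbdd h, fun h => hup _ _ hmem h⟩
          have e1 : Φn u = gcGn ξ2 ω n (sInf Su) := by
            simp only [hΦndef, gcGn, hξ2def, hf2def, hφsdef, hTidef]
            congr 1
            refine Finset.sum_congr rfl fun i _ => ?_
            congr 1
            rw [if_congr (hiff ((ζ i ω).2.1)) rfl rfl]
          have e2 : Φ u = gcG P (ξ2 0) (sInf Su) := by
            simp only [hΦdef, gcG, hξ2def, hf2def]
            refine integral_congr_ae (ae_of_all _ fun ω' => ?_)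
            show φfun (ζ 0 ω') * (if 1 + u < H ((ζ 0 ω').2.1) then (1:ℝ) else 0)
              = φfun (ζ 0 ω') * (if sInf Su ≤ (ζ 0 ω').2.1 then (1:ℝ) else 0)
            rw [if_congr (hiff ((ζ 0 ω').2.1)) rfl rfl]
          rw [Real.norm_eq_abs, e1, e2]
          exact (hN₂ n hnN₂ (sInf Su)).2
        · have hiff : ∀ r : ℝ, (1 + u < H r) ↔ (sInf Su < r) := by
            intro r
            constructor
            · intro h
              exact lt_of_le_of_ne (csInf_le hSbdd h) fun e => hmem (by rw [e]; exact h)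
            · intro h
              obtain ⟨r', hr', hlt⟩ := exists_lt_of_csInf_lt hSne h
              exact hup _ _ hr' hlt.le
          have e1 : Φn u = gcFn ξ2 ω n (sInf Su) := by
            simp only [hΦndef, gcFn, hξ2def, hf2def, hφsdef, hTidef]
            congr 1
            refine Finset.sum_congr rfl fun i _ => ?_
            congr 1
            rw [if_congr (hiff ((ζ i ω).2.1)) rfl rfl]
          have e2 : Φ u = gcF P (ξ2 0) (sInf Su) := by
            simp only [hΦdef, gcF, hξ2def, hf2def]
            refine integral_congr_ae (ae_of_all _ fun ω' => ?_)
            show φfun (ζ 0 ω') * (if 1 + u < H ((ζ 0 ω').2.1) then (1:ℝ) else 0)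
              = φfun (ζ 0 ω') * (if sInf Su < (ζ 0 ω').2.1 then (1:ℝ) else 0)
            rw [if_congr (hiff ((ζ 0 ω').2.1)) rfl rfl]
          rw [Real.norm_eq_abs, e1, e2]
          exact (hN₂ n hnN₂ (sInf Su)).1
      · have hno : ∀ r : ℝ, ¬(1 + u < H r) := fun r hr => hSne ⟨r, hr⟩
        have e1 : Φn u = 0 := by
          simp only [hΦndef]
          rw [Finset.sum_eq_zero fun i _ => by rw [if_neg (hno _), mul_zero], zero_div]
        have e2 : Φ u = 0 := by
          simp only [hΦdef]
          rw [integral_congr_ae (ae_of_all _ fun ω' => by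
            show φfun (ζ 0 ω') * (if 1 + u < H ((ζ 0 ω').2.1) then (1:ℝ) else 0) = 0
            rw [if_neg (hno _), mul_zero]), integral_zero]
        rw [e1, e2]
        simpa using hδ₀.le
    have hD : |(∫ u in Set.Ioc (0:ℝ) (M-1), Φn u) - ∫ u in Set.Ioc (0:ℝ) (M-1), Φ u|
        ≤ δ₀ * (M-1) := by
      rw [← integral_sub hintΦn hintΦ]
      have h := norm_integral_le_of_norm_le_const
        (μ := volume.restrict (Set.Ioc (0:ℝ) (M-1))) (C := δ₀)
        (f := fun u => Φn u - Φ u)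
        (by rw [ae_restrict_iff' measurableSet_Ioc]; exact ae_of_all _ hB)
      rw [Real.norm_eq_abs, measureReal_restrict_apply_univ,
        Real.volume_real_Ioc_of_le (by linarith : (0:ℝ) ≤ M - 1)] at h
      calc |(∫ u in Set.Ioc (0:ℝ) (M-1), (Φn u - Φ u))| ≤ δ₀ * (M - 1 - 0) := h
        _ = δ₀ * (M-1) := by ring
    have hQnEG : |SW/(n:ℝ) - EG| ≤ M * δ₀ := by
      rw [hQnsplit, hEGsplit]
      have e : (∑ i ∈ Finset.range n, φs i)/(n:ℝ) + (∫ u in Set.Ioc (0:ℝ) (M-1), Φn u)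
          - ((∫ ω', φfun (ζ 0 ω') ∂P) + ∫ u in Set.Ioc (0:ℝ) (M-1), Φ u)
          = ((∑ i ∈ Finset.range n, φs i)/(n:ℝ) - ∫ ω', φfun (ζ 0 ω') ∂P)
            + ((∫ u in Set.Ioc (0:ℝ) (M-1), Φn u) - ∫ u in Set.Ioc (0:ℝ) (M-1), Φ u) := by
        ring
      rw [e]
      calc |_ + _| ≤ _ + _ := abs_add_le _ _
        _ ≤ δ₀ + δ₀ * (M-1) := add_le_add hA hD
        _ = M * δ₀ := by ring
    -- Step D : the population identity
    set μ0 : Measure (E × ℝ × ℝ) := P.map (ζ 0) with hμ0def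
    haveI : IsProbabilityMeasure μ0 := by
      rw [hμ0def]; exact Measure.isProbabilityMeasure_map (hmeas 0).aemeasurable
    set ψ' : (E × ℝ × ℝ) × (E × ℝ × ℝ) → ℝ := fun p =>
      (if p.1.2.1 < p.1.2.2 ∧ p.1.2.1 < min p.2.2.1 p.2.2.2 then (1:ℝ) else 0) * H p.1.2.1
      with hψdef
    have hmA : Measurable fun p : (E × ℝ × ℝ) × (E × ℝ × ℝ) => p.1.2.1 :=
      (measurable_fst.comp (measurable_snd.comp measurable_fst))
    have hmB : Measurable fun p : (E × ℝ × ℝ) × (E × ℝ × ℝ) => p.1.2.2 :=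
      (measurable_snd.comp (measurable_snd.comp measurable_fst))
    have hmC : Measurable fun p : (E × ℝ × ℝ) × (E × ℝ × ℝ) => p.2.2.1 :=
      (measurable_fst.comp (measurable_snd.comp measurable_snd))
    have hmDD : Measurable fun p : (E × ℝ × ℝ) × (E × ℝ × ℝ) => p.2.2.2 :=
      (measurable_snd.comp (measurable_snd.comp measurable_snd))
    have hψmeas : Measurable ψ' := by
      rw [hψdef]
      refine Measurable.mul ?_ (hHmeas.comp hmA)
      exact Measurable.ite ((measurableSet_lt hmA hmB).inter
        (measurableSet_lt hmA (hmC.min hmDD))) measurable_const measurable_const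
    have hψbd : ∀ p, ‖ψ' p‖ ≤ M := by
      intro p
      rw [hψdef]
      show ‖(if p.1.2.1 < p.1.2.2 ∧ p.1.2.1 < min p.2.2.1 p.2.2.2 then (1:ℝ) else 0)
        * H p.1.2.1‖ ≤ M
      have h2 := hHrange p.1.2.1
      rw [Real.norm_eq_abs, abs_mul]
      calc |if p.1.2.1 < p.1.2.2 ∧ p.1.2.1 < min p.2.2.1 p.2.2.2 then (1:ℝ) else 0|
            * |H p.1.2.1| ≤ 1 * M := by
            refine mul_le_mul ?_ ?_ (abs_nonneg _) zero_le_one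
            · rw [abs_of_nonneg (ind_nonneg _)]; exact ind_le_one _
            · rw [abs_of_nonneg (le_trans zero_le_one h2.1)]; exact h2.2
        _ = M := one_mul M
    have hpair01 : P.map (fun ω' => (ζ 0 ω', ζ 1 ω')) = μ0.prod μ0 := by
      rw [(ProbabilityTheory.indepFun_iff_map_prod_eq_prod_map_map
          (hmeas 0).aemeasurable (hmeas 1).aemeasurable).mp
        (hindep.indepFun (by norm_num : (0:ℕ) ≠ 1)), hident 1, hμ0def]
    have hpair10 : P.map (fun ω' => (ζ 1 ω', ζ 0 ω')) = μ0.prod μ0 := by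
      rw [(ProbabilityTheory.indepFun_iff_map_prod_eq_prod_map_map
          (hmeas 1).aemeasurable (hmeas 0).aemeasurable).mp
        (hindep.indepFun (by norm_num : (1:ℕ) ≠ 0)), hident 1, hμ0def]
    have hint01 : Integrable (fun ω' => ψ' (ζ 0 ω', ζ 1 ω')) P :=
      ⟨(hψmeas.comp ((hmeas 0).prodMk (hmeas 1))).aestronglyMeasurable,
        HasFiniteIntegral.of_bounded (C := M) (ae_of_all _ fun ω' => hψbd _)⟩
    have hint10 : Integrable (fun ω' => ψ' (ζ 1 ω', ζ 0 ω')) P :=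
      ⟨(hψmeas.comp ((hmeas 1).prodMk (hmeas 0))).aestronglyMeasurable,
        HasFiniteIntegral.of_bounded (C := M) (ae_of_all _ fun ω' => hψbd _)⟩
    have hIprod : Integrable ψ' (μ0.prod μ0) :=
      ⟨hψmeas.aestronglyMeasurable,
        HasFiniteIntegral.of_bounded (C := M) (ae_of_all _ hψbd)⟩
    have hmap01 : ∫ ω', ψ' (ζ 0 ω', ζ 1 ω') ∂P = ∫ p, ψ' p ∂(μ0.prod μ0) := by
      rw [← hpair01, integral_map ((hmeas 0).prodMk (hmeas 1)).aemeasurable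
        (by rw [hpair01]; exact hψmeas.aestronglyMeasurable)]
    have hmap10 : ∫ ω', ψ' (ζ 1 ω', ζ 0 ω') ∂P = ∫ p, ψ' p ∂(μ0.prod μ0) := by
      rw [← hpair10, integral_map ((hmeas 1).prodMk (hmeas 0)).aemeasurable
        (by rw [hpair10]; exact hψmeas.aestronglyMeasurable)]
    have hfub2 : ∫ p, ψ' p ∂(μ0.prod μ0) = ∫ x, ∫ y, ψ' (x, y) ∂μ0 ∂μ0 :=
      integral_prod ψ' hIprod
    have hWμ : ∀ t' : ℝ, W t' = ∫ y, (if t' < min y.2.1 y.2.2 then (1:ℝ) else 0) ∂μ0 := by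
      intro t'
      have hmind : Measurable fun y : E × ℝ × ℝ =>
          if t' < min y.2.1 y.2.2 then (1:ℝ) else 0 :=
        Measurable.ite (measurableSet_lt measurable_const
          (measurable_snd.fst.min measurable_snd.snd)) measurable_const measurable_const
      rw [hμ0def, integral_map (f := fun y : E × ℝ × ℝ =>
          if t' < min y.2.1 y.2.2 then (1:ℝ) else 0)
        (hmeas 0).aemeasurable hmind.aestronglyMeasurable, hWdef]
      simp only [gcF, hξ1def, hf1def]
      refine integral_congr_ae (ae_of_all _ fun ω' => ?_)
      show (1:ℝ) * (if t' < min (ζ 0 ω').2.1 (ζ 0 ω').2.2 then (1:ℝ) else 0)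
        = if t' < min (ζ 0 ω').2.1 (ζ 0 ω').2.2 then (1:ℝ) else 0
      rw [one_mul]
    have hinner : ∀ x : E × ℝ × ℝ, ∫ y, ψ' (x, y) ∂μ0 = φfun x * H x.2.1 := by
      intro x
      have h1 : ∀ y : E × ℝ × ℝ, ψ' (x, y) =
          ((if x.2.1 < x.2.2 then (1:ℝ) else 0) * H x.2.1)
            * (if x.2.1 < min y.2.1 y.2.2 then (1:ℝ) else 0) := by
        intro y
        rw [hψdef]
        show (if x.2.1 < x.2.2 ∧ x.2.1 < min y.2.1 y.2.2 then (1:ℝ) else 0) * H x.2.1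
          = ((if x.2.1 < x.2.2 then (1:ℝ) else 0) * H x.2.1)
            * (if x.2.1 < min y.2.1 y.2.2 then (1:ℝ) else 0)
        rw [ind_and]
        ring
      rw [integral_congr_ae (ae_of_all _ h1), integral_const_mul, ← hWμ x.2.1, hφfundef]
      simp only
      ring
    have hEGμ : ∫ x, φfun x * H x.2.1 ∂μ0 = EG := by
      rw [hμ0def, integral_map (f := fun x : E × ℝ × ℝ => φfun x * H x.2.1)
        (hmeas 0).aemeasurable
        (Measurable.aestronglyMeasurable (hφfunmeas.mul
          (hHmeas.comp measurable_snd.fst))), hEGdef]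
    have hE : ∫ ω', psibar g.1 (ζ 0 ω') (ζ 1 ω') ∂P = EG := by
      have hpt : ∀ ω', psibar g.1 (ζ 0 ω') (ζ 1 ω')
          = (ψ' (ζ 0 ω', ζ 1 ω') + ψ' (ζ 1 ω', ζ 0 ω'))/2 := by
        intro ω'
        simp only [psibar, psiker, hψdef]
        rw [hHval _ (hTrange 0 ω'), hHval _ (hTrange 1 ω')]
      rw [integral_congr_ae (ae_of_all _ hpt)]
      have e : ∫ ω', (ψ' (ζ 0 ω', ζ 1 ω') + ψ' (ζ 1 ω', ζ 0 ω'))/2 ∂P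
          = ((∫ ω', ψ' (ζ 0 ω', ζ 1 ω') ∂P) + ∫ ω', ψ' (ζ 1 ω', ζ 0 ω') ∂P)/2 := by
        rw [integral_div, integral_add hint01 hint10]
      rw [e, hmap01, hmap10, hfub2, integral_congr_ae (ae_of_all _ hinner), hEGμ]
      ring
    -- final assembly
    rw [hstat, hE]
    have hsplit : (∑ i ∈ Finset.range n, (a i * Sb i - a i * b i i)) / q
        = (∑ i ∈ Finset.range n, a i * Sb i)/q - (∑ i ∈ Finset.range n, a i * b i i)/q := by
      rw [← sub_div, Finset.sum_sub_distrib]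
    rw [hsplit]
    have hdec : (∑ i ∈ Finset.range n, a i * Sb i)/q
          - (∑ i ∈ Finset.range n, a i * b i i)/q - EG
        = ((∑ i ∈ Finset.range n, a i * Sb i)/q - SW/((n:ℝ)-1))
          + (SW/((n:ℝ)-1) - SW/(n:ℝ)) + (SW/(n:ℝ) - EG)
          + (-((∑ i ∈ Finset.range n, a i * b i i)/q)) := by
      ring
    rw [hdec]
    have habs : |((∑ i ∈ Finset.range n, a i * Sb i)/q - SW/((n:ℝ)-1))
          + (SW/((n:ℝ)-1) - SW/(n:ℝ)) + (SW/(n:ℝ) - EG)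
          + (-((∑ i ∈ Finset.range n, a i * b i i)/q))|
        ≤ 2*M*δ₀ + M/((n:ℝ)-1) + M*δ₀ + M/((n:ℝ)-1) := by
      have h4 : |(-((∑ i ∈ Finset.range n, a i * b i i)/q))| ≤ M/((n:ℝ)-1) := by
        rw [abs_neg]; exact hdiag
      have t1 := abs_add_four ((∑ i ∈ Finset.range n, a i * Sb i)/q - SW/((n:ℝ)-1))
        (SW/((n:ℝ)-1) - SW/(n:ℝ)) (SW/(n:ℝ) - EG)
        (-((∑ i ∈ Finset.range n, a i * b i i)/q))
      linarith [hmain1, hmain2, hQnEG]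
    refine le_trans habs ?_
    have hMδ : M * δ₀ ≤ δ/8 := by
      rw [hδ₀def, show M * (δ/(8*(M+1))) = (M*δ)/(8*(M+1)) from by ring,
        div_le_div_iff₀ (by positivity) (by norm_num : (0:ℝ) < 8)]
      nlinarith [hδ.le, hM0.le]
    have h2M : M/((n:ℝ)-1) + M/((n:ℝ)-1) = 2*M/((n:ℝ)-1) := by ring
    linarith [hMn]

  have hsup_le : (⨆ g : {g : ℝ → ℝ // memG ε Tmax g},
      |(2 / (n * (n - 1) : ℝ)) *
          (∑ i ∈ Finset.range n, ∑ j ∈ Finset.range n,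
            if i < j then psibar g.1 (ζ i ω) (ζ j ω) else 0) -
        ∫ ω', psibar g.1 (ζ 0 ω') (ζ 1 ω') ∂P|) ≤ 3*δ/4 :=
    Real.iSup_le key (by linarith)
  have hsup_nonneg : (0:ℝ) ≤ ⨆ g : {g : ℝ → ℝ // memG ε Tmax g},
      |(2 / (n * (n - 1) : ℝ)) *
          (∑ i ∈ Finset.range n, ∑ j ∈ Finset.range n,
            if i < j then psibar g.1 (ζ i ω) (ζ j ω) else 0) -
        ∫ ω', psibar g.1 (ζ 0 ω') (ζ 1 ω') ∂P| :=
    Real.iSup_nonneg fun g => abs_nonneg _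
  rw [Real.dist_eq, sub_zero, abs_of_nonneg hsup_nonneg]
  linarith
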